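/- Let V and W be infinite-dimensional vector spaces over a division ring D. Every nontrivial sub-bimodule of L(V,W) (an (L(W),L(V))-sub-bimodule that is neither 0 nor all of L(V,W)) has the form { T ∈ L(V,W) : rank T < e } for a unique infinite cardinal e ≤ min(dim V, dim W). -/

import Mathlib

universe u

open Cardinal

section Aux
variable {D : Type u} [DivisionRing D]

lemma aux_exists_inj {M N : Type u} [AddCommGroup M] [Module D M]
    [AddCommGroup N] [Module D N] (h : Module.rank D M ≤ Module.rank D N) :
    ∃ f : M →ₗ[D] N, Function.Injective f := by
  let bM := Module.Basis.ofVectorSpace D M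
  let bN := Module.Basis.ofVectorSpace D N
  have h' : #(Module.Basis.ofVectorSpaceIndex D M) ≤ #(Module.Basis.ofVectorSpaceIndex D N) := by
    rw [bM.mk_eq_rank'', bN.mk_eq_rank'']; exact h
  obtain ⟨e⟩ := (Cardinal.le_def _ _).mp h'
  refine ⟨(bN.repr.symm.toLinearMap.comp (Finsupp.lmapDomain D D ⇑e)).comp
      bM.repr.toLinearMap, ?_⟩
  have h1 : Function.Injective (Finsupp.lmapDomain D D (⇑e) :
      (_ →₀ D) →ₗ[D] (_ →₀ D)) := Finsupp.mapDomain_injective e.injective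
  simp only [LinearMap.coe_comp, LinearEquiv.coe_coe]
  exact (bN.repr.symm.injective.comp h1).comp bM.repr.injective

lemma aux_factor {V W : Type u} [AddCommGroup V] [Module D V] [AddCommGroup W] [Module D W]
    (S T : V →ₗ[D] W)
    (h : Module.rank D (LinearMap.range T) ≤ Module.rank D (LinearMap.range S)) :
    ∃ (A : W →ₗ[D] W) (B : V →ₗ[D] V), T = (A.comp S).comp B := by
  obtain ⟨UT, hUT⟩ := Submodule.exists_isCompl (LinearMap.ker T)
  obtain ⟨US, hUS⟩ := Submodule.exists_isCompl (LinearMap.ker S)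
  have eT : Module.rank D UT = Module.rank D (LinearMap.range T) := by
    rw [← (LinearMap.quotKerEquivRange T).rank_eq,
      (Submodule.quotientEquivOfIsCompl _ _ hUT).rank_eq]
  have eS : Module.rank D US = Module.rank D (LinearMap.range S) := by
    rw [← (LinearMap.quotKerEquivRange S).rank_eq,
      (Submodule.quotientEquivOfIsCompl _ _ hUS).rank_eq]
  obtain ⟨φ, hφ⟩ := aux_exists_inj (D := D) (M := UT) (N := US) (by rw [eT, eS]; exact h)
  set πT : V →ₗ[D] UT := UT.linearProjOfIsCompl (LinearMap.ker T) hUT.symm with hπT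
  have hTπ : ∀ v : V, T (πT v) = T v := by
    intro v
    have hv := Submodule.projection_add_projection_eq_self hUT.symm v
    simp only [Submodule.projection_apply] at hv
    conv_rhs => rw [← hv]
    rw [map_add, LinearMap.mem_ker.mp (Submodule.coe_mem
      ((LinearMap.ker T).projectionOnto UT hUT.symm.symm v)), add_zero]
    rfl
  set ψ : UT →ₗ[D] W := S.comp (US.subtype.comp φ) with hψ
  have hψinj : Function.Injective ψ := by
    rw [← LinearMap.ker_eq_bot, LinearMap.ker_eq_bot']
    intro u hu
    have h1 : (↑(φ u) : V) ∈ LinearMap.ker S := LinearMap.mem_ker.mpr hu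
    have h2 : (↑(φ u) : V) ∈ US := Submodule.coe_mem _
    have h3 : φ u = 0 := by
      have := Submodule.disjoint_def.mp hUS.disjoint _ h1 h2
      exact Subtype.ext this
    exact hφ (by rw [h3, map_zero])
  set M := LinearMap.range ψ with hM
  obtain ⟨Mc, hMc⟩ := Submodule.exists_isCompl M
  set ψe : UT ≃ₗ[D] M := LinearEquiv.ofInjective ψ hψinj with hψe
  set A : W →ₗ[D] W := (T.comp UT.subtype).comp
    (ψe.symm.toLinearMap.comp (M.linearProjOfIsCompl Mc hMc)) with hA
  set B : V →ₗ[D] V := (US.subtype.comp φ).comp πT with hB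
  refine ⟨A, B, ?_⟩
  ext v
  have h1 : S (B v) = ψ (πT v) := rfl
  have hmem : ψ (πT v) ∈ M := LinearMap.mem_range_self ψ _
  have h2 : M.linearProjOfIsCompl Mc hMc (ψ (πT v)) = ⟨ψ (πT v), hmem⟩ :=
    Submodule.linearProjOfIsCompl_apply_left hMc ⟨ψ (πT v), hmem⟩
  have h3 : ψe.symm ⟨ψ (πT v), hmem⟩ = πT v := by
    rw [LinearEquiv.symm_apply_eq]
    exact Subtype.ext (LinearEquiv.ofInjective_apply ψ (πT v)).symm
  have : A (S (B v)) = T v := by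
    show (T.comp UT.subtype) (ψe.symm (M.linearProjOfIsCompl Mc hMc (S (B v)))) = T v
    rw [h1, h2, h3]
    exact hTπ v
  exact this.symm


lemma aux_rank_exists {V W : Type u} [AddCommGroup V] [Module D V] [AddCommGroup W] [Module D W]
    (c : Cardinal.{u}) (hcV : c ≤ Module.rank D V) (hcW : c ≤ Module.rank D W) :
    ∃ T : V →ₗ[D] W, Module.rank D (LinearMap.range T) = c := by
  let bV := Module.Basis.ofVectorSpace D V
  let bW := Module.Basis.ofVectorSpace D W
  obtain ⟨f⟩ := (Cardinal.le_def c.out (Module.Basis.ofVectorSpaceIndex D V)).mp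
    (by rw [Cardinal.mk_out, bV.mk_eq_rank'']; exact hcV)
  obtain ⟨g⟩ := (Cardinal.le_def c.out (Module.Basis.ofVectorSpaceIndex D W)).mp
    (by rw [Cardinal.mk_out, bW.mk_eq_rank'']; exact hcW)
  set A : (c.out →₀ D) →ₗ[D] W := bW.repr.symm.toLinearMap.comp (Finsupp.lmapDomain D D ⇑g)
    with hA
  set B : V →ₗ[D] (c.out →₀ D) :=
    (Finsupp.lcomapDomain (⇑f) f.injective).comp bV.repr.toLinearMap with hB
  have hBsurj : LinearMap.range B = ⊤ := by
    rw [LinearMap.range_eq_top]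
    have hc : Function.Surjective (Finsupp.lcomapDomain (M := D) (R := D) (⇑f) f.injective) := by
      intro l
      refine ⟨Finsupp.embDomain f l, ?_⟩
      ext a
      show Finsupp.comapDomain (⇑f) (Finsupp.embDomain f l) f.injective.injOn a = l a
      rw [Finsupp.comapDomain_apply, Finsupp.embDomain_apply]
      have hh : ∃ a_1, f a_1 = f a := ⟨a, rfl⟩
      rw [dif_pos hh, f.injective hh.choose_spec]
    exact hc.comp bV.repr.surjective
  have hAinj : Function.Injective A := by
    have h1 : Function.Injective (Finsupp.lmapDomain D D (⇑g) :
        (c.out →₀ D) →ₗ[D] (_ →₀ D)) := Finsupp.mapDomain_injective g.injective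
    rw [hA]
    simp only [LinearMap.coe_comp, LinearEquiv.coe_coe]
    exact bW.repr.symm.injective.comp h1
  refine ⟨A.comp B, ?_⟩
  rw [LinearMap.range_comp_of_range_eq_top A hBsurj,
    ← (LinearEquiv.ofInjective A hAinj).rank_eq, rank_finsupp_self', Cardinal.mk_out]

lemma aux_finrank_op {V W : Type u} [AddCommGroup V] [Module D V] [AddCommGroup W] [Module D W]
    (hVr : Cardinal.aleph0 ≤ Module.rank D V) (hWr : Cardinal.aleph0 ≤ Module.rank D W)
    (n : ℕ) :
    ∃ fs : Fin n → (V →ₗ[D] W),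
      (∀ i, Module.rank D (LinearMap.range (fs i)) ≤ 1) ∧
      (n : Cardinal.{u}) ≤ Module.rank D (LinearMap.range (∑ i, fs i)) := by
  let bV := Module.Basis.ofVectorSpace D V
  let bW := Module.Basis.ofVectorSpace D W
  have hιV : Infinite (Module.Basis.ofVectorSpaceIndex D V) := by
    rw [Cardinal.infinite_iff, bV.mk_eq_rank'']; exact hVr
  have hιW : Infinite (Module.Basis.ofVectorSpaceIndex D W) := by
    rw [Cardinal.infinite_iff, bW.mk_eq_rank'']; exact hWr
  let f : Fin n ↪ (Module.Basis.ofVectorSpaceIndex D V) :=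
    Fin.valEmbedding.trans (Infinite.natEmbedding _)
  let g : Fin n ↪ (Module.Basis.ofVectorSpaceIndex D W) :=
    Fin.valEmbedding.trans (Infinite.natEmbedding _)
  set fs : Fin n → (V →ₗ[D] W) := fun i =>
    (LinearMap.toSpanSingleton D W (bW (g i))).comp (bV.coord (f i)) with hfs
  have hrk1 : ∀ i, Module.rank D (LinearMap.range (fs i)) ≤ 1 := by
    intro i
    have hle : LinearMap.range (fs i) ≤ Submodule.span D {bW (g i)} := by
      rintro x ⟨v, rfl⟩
      exact Submodule.smul_mem _ _ (Submodule.mem_span_singleton_self _)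
    refine (Submodule.rank_mono hle).trans ?_
    refine (rank_span_le _).trans ?_
    simp
  have happ : ∀ i j : Fin n, (fs i) (bV (f j)) = if i = j then bW (g i) else 0 := by
    intro i j
    simp only [hfs, LinearMap.coe_comp, Function.comp_apply, Module.Basis.coord_apply,
      Module.Basis.repr_self, LinearMap.toSpanSingleton_apply, Finsupp.single_apply]
    by_cases hij : i = j
    · subst hij; simp
    · have hf : ¬ ((f j : Module.Basis.ofVectorSpaceIndex D V) = f i) := fun hfe =>
        hij (f.injective hfe).symm
      simp [hf, hij]
  set T := ∑ i, fs i with hT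
  have hTb : ∀ j : Fin n, T (bV (f j)) = bW (g j) := by
    intro j
    rw [hT, LinearMap.sum_apply]
    calc (∑ i, (fs i) (bV (f j))) = ∑ i, if i = j then bW (g i) else 0 := by
          exact Finset.sum_congr rfl fun i _ => happ i j
      _ = bW (g j) := by rw [Finset.sum_ite_eq' Finset.univ j (fun i => bW (g i))]; simp
  refine ⟨fs, hrk1, ?_⟩
  have livW : LinearIndependent D (fun j : Fin n => bW (g j)) :=
    bW.linearIndependent.comp (⇑g) g.injective
  set v : Fin n → LinearMap.range T := fun j =>
    ⟨bW (g j), by rw [← hTb j]; exact LinearMap.mem_range_self _ _⟩ with hv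
  have hlv : LinearIndependent D v := by
    apply LinearIndependent.of_comp (LinearMap.range T).subtype
    exact livW
  have := hlv.cardinal_lift_le_rank
  simpa using this
end Aux

/-- `I` is a sub-bimodule of `L(V,W)`: closed under addition, under left
composition with endomorphisms of `W`, and under right composition with
endomorphisms of `V`. -/
def IsBiSubmodule {D V W : Type u} [DivisionRing D]
    [AddCommGroup V] [Module D V] [AddCommGroup W] [Module D W]
    (I : Set (V →ₗ[D] W)) : Prop :=
  (0 : V →ₗ[D] W) ∈ I ∧ (∀ S T : V →ₗ[D] W, S ∈ I → T ∈ I → S + T ∈ I) ∧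
    (∀ S ∈ I, ∀ A : W →ₗ[D] W, A.comp S ∈ I) ∧
    (∀ S ∈ I, ∀ A : V →ₗ[D] V, S.comp A ∈ I)

theorem stmt_19 {D V W : Type u} [DivisionRing D]
    [AddCommGroup V] [Module D V] [AddCommGroup W] [Module D W]
    (hV : ¬ FiniteDimensional D V) (hW : ¬ FiniteDimensional D W)
    (I : Set (V →ₗ[D] W)) (hI : IsBiSubmodule I)
    (hne0 : I ≠ {0}) (hneuniv : I ≠ Set.univ) :
    ∃! e : Cardinal.{u}, Cardinal.aleph0 ≤ e ∧
      e ≤ min (Module.rank D V) (Module.rank D W) ∧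
      I = {T : V →ₗ[D] W | Module.rank D (LinearMap.range T) < e} := by
  obtain ⟨h0, hadd, hleft, hright⟩ := hI
  have hVr : Cardinal.aleph0 ≤ Module.rank D V := by
    by_contra hc
    push_neg at hc
    have : IsNoetherian D V := IsNoetherian.iff_rank_lt_aleph0.mpr hc
    exact hV ⟨IsNoetherian.noetherian ⊤⟩
  have hWr : Cardinal.aleph0 ≤ Module.rank D W := by
    by_contra hc
    push_neg at hc
    have : IsNoetherian D W := IsNoetherian.iff_rank_lt_aleph0.mpr hc
    exact hW ⟨IsNoetherian.noetherian ⊤⟩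
  haveI : Nonempty I := ⟨⟨0, h0⟩⟩
  have hcomp : ∀ S ∈ I, ∀ T : V →ₗ[D] W,
      Module.rank D (LinearMap.range T) ≤ Module.rank D (LinearMap.range S) → T ∈ I := by
    intro S hS T hT
    obtain ⟨A, B, hAB⟩ := aux_factor S T hT
    rw [hAB]
    exact hright _ (hleft _ hS A) B
  set e : Cardinal.{u} :=
    ⨆ S : I, Order.succ (Module.rank D (LinearMap.range (S : V →ₗ[D] W))) with he
  have hIe : ∀ T ∈ I, Module.rank D (LinearMap.range T) < e := by
    intro T hT
    exact lt_of_lt_of_le (Order.lt_succ _)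
      (le_ciSup (Cardinal.bddAbove_range _) (⟨T, hT⟩ : I))
  have heI : ∀ T : V →ₗ[D] W, Module.rank D (LinearMap.range T) < e → T ∈ I := by
    intro T hT
    by_contra hTn
    have hall : ∀ S : I, Order.succ (Module.rank D (LinearMap.range (S : V →ₗ[D] W))) ≤
        Module.rank D (LinearMap.range T) := by
      intro S
      rw [Order.succ_le_iff]
      by_contra hc
      push_neg at hc
      exact hTn (hcomp S S.2 T hc)
    exact absurd (ciSup_le hall) (not_le.mpr hT)
  have hset : I = {T : V →ₗ[D] W | Module.rank D (LinearMap.range T) < e} :=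
    Set.ext fun T => ⟨hIe T, heI T⟩
  obtain ⟨S0, hS0I, hS0⟩ : ∃ S0 ∈ I, S0 ≠ (0 : V →ₗ[D] W) := by
    by_contra hc
    push_neg at hc
    exact hne0 (Set.eq_singleton_iff_unique_mem.mpr ⟨h0, hc⟩)
  have hS0rank : 1 ≤ Module.rank D (LinearMap.range S0) := by
    obtain ⟨x, hx⟩ : ∃ x, S0 x ≠ 0 := by
      by_contra hc; push_neg at hc; exact hS0 (LinearMap.ext hc)
    have : Nontrivial (LinearMap.range S0) :=
      ⟨⟨⟨S0 x, LinearMap.mem_range_self _ _⟩, 0, by simpa using hx⟩⟩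
    exact Cardinal.one_le_iff_pos.mpr rank_pos
  have haleph : Cardinal.aleph0 ≤ e := by
    rw [Cardinal.aleph0_le]
    intro n
    obtain ⟨fs, hfs1, hfsn⟩ := aux_finrank_op (D := D) (V := V) (W := W) hVr hWr n
    have hTI : (∑ i, fs i) ∈ I := by
      apply Finset.sum_induction fs (· ∈ I) hadd h0
      intro i _
      exact hcomp S0 hS0I (fs i) ((hfs1 i).trans hS0rank)
    exact hfsn.trans (hIe _ hTI).le
  have hrankle : ∀ T : V →ₗ[D] W,
      Module.rank D (LinearMap.range T) ≤ min (Module.rank D V) (Module.rank D W) :=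
    fun T => le_min (rank_range_le T) (Submodule.rank_le _)
  have hemin : e ≤ min (Module.rank D V) (Module.rank D W) := by
    by_contra hc
    push_neg at hc
    obtain ⟨S, hSI, hSr⟩ : ∃ S ∈ I,
        min (Module.rank D V) (Module.rank D W) ≤ Module.rank D (LinearMap.range S) := by
      by_contra hc2
      push_neg at hc2
      have : e ≤ min (Module.rank D V) (Module.rank D W) :=
        ciSup_le fun S => Order.succ_le_iff.mpr (hc2 S S.2)
      exact absurd this (not_le.mpr hc)
    apply hneuniv
    ext T
    simp only [Set.mem_univ, iff_true]
    exact hcomp S hSI T ((hrankle T).trans hSr)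
  refine ⟨e, ⟨haleph, hemin, hset⟩, ?_⟩
  rintro e' ⟨h'a, h'min, h'set⟩
  by_contra hne
  rcases lt_or_gt_of_ne hne with hlt | hlt
  · obtain ⟨T, hTr⟩ := aux_rank_exists (D := D) e'
      (h'min.trans (min_le_left _ _)) (h'min.trans (min_le_right _ _))
    have hTI : T ∈ I := heI T (by rw [hTr]; exact hlt)
    rw [h'set] at hTI
    simp only [Set.mem_setOf_eq, hTr] at hTI
    exact lt_irrefl _ hTI
  · obtain ⟨T, hTr⟩ := aux_rank_exists (D := D) e
      (hemin.trans (min_le_left _ _)) (hemin.trans (min_le_right _ _))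
    have hTI : T ∈ I := by
      rw [h'set]
      simp only [Set.mem_setOf_eq, hTr]
      exact hlt
    have := hIe T hTI
    rw [hTr] at this
    exact lt_irrefl _ this
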